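/- The maximum cardinality of a 2-distance set X in H_7 such that R_7 ⊆ X and the two distances of X are √2 and 2 is exactly 29, attained by X = R_7 ∪ Y, where Y = {v_A : A is a 3-element subset of {1,…,8} with 1 ∈ A} and v_A ∈ H_7 is the point whose i-th coordinate equals −1/2 for i ∈ A and 1/2 for i ∉ A. Moreover this X is a maximal 2-distance set in H_7. -/

import Mathlib

noncomputable section

open scoped BigOperators Classical

/-- The set of Euclidean distances between distinct points of `X`. -/
def distSet {m : ℕ} (X : Set (EuclideanSpace ℝ (Fin m))) : Set ℝ :=
  {r | ∃ x ∈ X, ∃ y ∈ X, x ≠ y ∧ dist x y = r}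

/-- `X` is a 2-distance set: exactly two distances occur between distinct points. -/
def IsTwoDistSet {m : ℕ} (X : Set (EuclideanSpace ℝ (Fin m))) : Prop :=
  (distSet X).ncard = 2

/-- The affine hyperplane `H_d = {x ∈ ℝ^{d+1} : ∑ x_i = 1}`. -/
def Hplane (d : ℕ) : Set (EuclideanSpace ℝ (Fin (d+1))) :=
  {x | ∑ i, x i = 1}

/-- The regular simplex `R_d`: the standard basis vectors of `ℝ^{d+1}`. -/
def simplex (d : ℕ) : Set (EuclideanSpace ℝ (Fin (d+1))) :=
  Set.range (fun i => EuclideanSpace.single i (1:ℝ))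

/-- The constant `c = (1 - (d+1-k)β)/(d+1)`. -/
def cval (d k : ℕ) (β : ℝ) : ℝ := (1 - ((d:ℝ) + 1 - (k:ℝ)) * β) / ((d:ℝ) + 1)

/-- The set `T_d(k,β)` of points of `H_d` all of whose coordinates lie in `{c, c+β}`,
with exactly `k` coordinates equal to `c`. -/
def Tset (d k : ℕ) (β : ℝ) : Set (EuclideanSpace ℝ (Fin (d+1))) :=
  {x | x ∈ Hplane d ∧ (∀ i, x i = cval d k β ∨ x i = cval d k β + β) ∧
    {i | x i = cval d k β}.ncard = k}

/-- The point of `H_7` attached to a 3-subset `A` of `{1,…,8}`: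
`-1/2` on `A`, `1/2` elsewhere. -/
def vSeven (A : Finset (Fin (7+1))) : EuclideanSpace ℝ (Fin (7+1)) :=
  WithLp.toLp 2 (fun i => if i ∈ A then (-1/2 : ℝ) else 1/2)


abbrev E8 := EuclideanSpace ℝ (Fin 8)
def ee (i : Fin 8) : E8 := EuclideanSpace.single i (1:ℝ)

lemma dist_eq' (x y : E8) : dist x y = Real.sqrt (∑ i, (x i - y i)^2) := by
  rw [EuclideanSpace.dist_eq]
  congr 1
  exact Finset.sum_congr rfl fun i _ => by rw [Real.dist_eq, sq_abs]

lemma sum_sq_single (x : E8) (i : Fin 8) :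
    ∑ j, (x j - ee i j)^2 = ∑ j, (x j)^2 - 2 * x i + 1 := by
  have h : ∀ j, (x j - ee i j)^2 = (x j)^2 + (if j = i then 1 - 2 * x j else 0) := by
    intro j
    by_cases h : j = i <;> simp [ee, EuclideanSpace.single_apply, h] <;> ring
  simp only [h, Finset.sum_add_distrib, Finset.sum_ite_eq' Finset.univ i,
    Finset.mem_univ, if_true]
  ring

lemma sum_ite_mem' (A : Finset (Fin 8)) (a b : ℝ) :
    ∑ i, (if i ∈ A then a else b) = A.card * a + (8 - A.card : ℕ) * b := by
  rw [Finset.sum_ite, Finset.sum_const, Finset.sum_const]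
  have h1 : (Finset.univ.filter (· ∈ A)) = A := by ext i; simp
  have h2 : (Finset.univ.filter (¬ · ∈ A)).card = 8 - A.card := by
    rw [Finset.filter_not, Finset.card_sdiff_of_subset (by simp [h1])]
    simp [h1]
  rw [h1, h2]; simp [mul_comm]

lemma sum_vSeven {A : Finset (Fin 8)} (hA : A.card = 3) : ∑ i, vSeven A i = 1 := by
  simp only [vSeven, PiLp.toLp_apply]
  rw [sum_ite_mem' A (-1/2) (1/2), hA]
  norm_num

lemma sum_sq_vSeven {A : Finset (Fin 8)} (hA : A.card = 3) : ∑ i, (vSeven A i)^2 = 2 := by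
  have : ∀ i, (vSeven A i)^2 = ((1:ℝ)/4) := by
    intro i; by_cases h : i ∈ A <;> simp [vSeven, h, PiLp.toLp_apply] <;> norm_num
  simp [this]; norm_num

lemma dist_vSeven_single {A : Finset (Fin 8)} (hA : A.card = 3) (i : Fin 8) :
    dist (vSeven A) (ee i) = if i ∈ A then 2 else Real.sqrt 2 := by
  rw [dist_eq', sum_sq_single, sum_sq_vSeven hA]
  by_cases h : i ∈ A
  · simp only [vSeven, PiLp.toLp_apply, h, if_true]
    rw [show (2:ℝ) - 2*(-1/2) + 1 = 4 by ring, show (4:ℝ) = 2^2 by norm_num,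
      Real.sqrt_sq (by norm_num)]
  · simp only [vSeven, PiLp.toLp_apply, h, if_false]
    norm_num

lemma dist_single_single' {i j : Fin 8} (h : i ≠ j) :
    dist (ee i) (ee j) = Real.sqrt 2 := by
  rw [dist_eq', sum_sq_single]
  have h1 : ∑ k, (ee i k)^2 = 1 := by
    have hk : ∀ k, (ee i k)^2 = if k = i then (1:ℝ) else 0 := fun k => by
      by_cases h : k = i <;> simp [ee, EuclideanSpace.single_apply, h]
    rw [Finset.sum_congr rfl fun k _ => hk k, Finset.sum_ite_eq' Finset.univ i]
    simp
  have h2 : ee i j = 0 := by simp [ee, EuclideanSpace.single_apply, h.symm]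
  rw [h1, h2]; norm_num

lemma dist_vSeven_vSeven {A B : Finset (Fin 8)} (hA : A.card = 3) (hB : B.card = 3) :
    dist (vSeven A) (vSeven B) = Real.sqrt (6 - 2 * ((A ∩ B).card : ℝ)) := by
  rw [dist_eq']
  congr 1
  have h : ∀ i, (vSeven A i - vSeven B i)^2 =
      (if i ∈ A then (1:ℝ) else 0) + (if i ∈ B then (1:ℝ) else 0)
        - 2 * (if i ∈ A ∩ B then (1:ℝ) else 0) := by
    intro i
    by_cases ha : i ∈ A <;> by_cases hb : i ∈ B <;>
      simp [vSeven, PiLp.toLp_apply, ha, hb, Finset.mem_inter] <;> norm_num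
  simp only [h, Finset.sum_sub_distrib, Finset.sum_add_distrib, ← Finset.mul_sum]
  rw [sum_ite_mem' A 1 0, sum_ite_mem' B 1 0, sum_ite_mem' (A ∩ B) 1 0, hA, hB]
  push_cast; ring

lemma vSeven_injective : Function.Injective vSeven := by
  intro A B h
  ext i
  have := congrArg (fun v : E8 => v i) h
  by_cases ha : i ∈ A <;> by_cases hb : i ∈ B <;>
    simp [vSeven, PiLp.toLp_apply, ha, hb] at this ⊢ <;> norm_num at this

lemma vSeven_ne_single (A : Finset (Fin 8)) (i : Fin 8) : vSeven A ≠ ee i := by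
  intro h
  have := congrArg (fun v : E8 => v i) h
  simp [ee, EuclideanSpace.single_apply, vSeven, PiLp.toLp_apply] at this
  by_cases ha : i ∈ A <;> simp [ha] at this <;> norm_num at this

lemma charac {x : E8} (hx : ∑ i, x i = 1)
    (h : ∀ i, dist x (ee i) = Real.sqrt 2 ∨ dist x (ee i) = 2) :
    ∃ A : Finset (Fin 8), A.card = 3 ∧ x = vSeven A := by
  set N := ∑ j, (x j)^2 with hN
  have hd : ∀ i, x i = (N - 1)/2 ∨ x i = (N - 3)/2 := by
    intro i
    have hnn : (0:ℝ) ≤ ∑ j, (x j - ee i j)^2 :=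
      Finset.sum_nonneg fun j _ => sq_nonneg _
    have hsq : dist x (ee i) ^ 2 = N - 2 * x i + 1 := by
      rw [dist_eq', Real.sq_sqrt hnn, sum_sq_single]
    rcases h i with h' | h'
    · left
      rw [h', Real.sq_sqrt (by norm_num : (0:ℝ) ≤ 2)] at hsq
      linarith
    · right
      rw [h'] at hsq; norm_num at hsq
      linarith
  set A := Finset.univ.filter (fun i => x i = (N - 3)/2) with hAdef
  have hxA : ∀ i, x i = if i ∈ A then (N-3)/2 else (N-1)/2 := by
    intro i
    by_cases hi : i ∈ A
    · simp only [hi, if_true]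
      simpa [hAdef] using hi
    · simp only [hi, if_false]
      rcases hd i with h' | h'
      · exact h'
      · exact absurd (by simp [hAdef, h']) hi
  have e1 : ∑ i, x i = (A.card : ℝ) * ((N-3)/2) + ((8 - A.card : ℕ) : ℝ) * ((N-1)/2) := by
    rw [Finset.sum_congr rfl fun i _ => hxA i, sum_ite_mem']
  have e2 : ∑ i, (x i)^2
      = (A.card : ℝ) * ((N-3)/2)^2 + ((8 - A.card : ℕ) : ℝ) * ((N-1)/2)^2 := by
    have : ∀ i, (x i)^2 = if i ∈ A then ((N-3)/2)^2 else ((N-1)/2)^2 := by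
      intro i; rw [hxA i]; by_cases hi : i ∈ A <;> simp [hi]
    rw [Finset.sum_congr rfl fun i _ => this i, sum_ite_mem']
  have hcard : A.card ≤ 8 := by
    have := A.card_le_univ; simpa using this
  have hcast : ((8 - A.card : ℕ) : ℝ) = 8 - (A.card : ℝ) := by
    push_cast [hcard]; ring
  rw [hx, hcast] at e1
  rw [← hN, hcast] at e2
  set k := (A.card : ℝ) with hk
  have hN2 : N = 2 := by nlinarith [sq_nonneg (N - 2), sq_nonneg (k - 3)]
  have hk3 : k = 3 := by nlinarith
  have hA3 : A.card = 3 := by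
    have h' : (A.card : ℝ) = 3 := by rw [← hk]; exact hk3
    exact_mod_cast h'
  refine ⟨A, hA3, ?_⟩
  ext i
  rw [show (vSeven A : EuclideanSpace ℝ (Fin 8)) i = if i ∈ A then (-1/2:ℝ) else 1/2 from rfl]
  rw [hxA i, hN2]
  norm_num

lemma ee_injective : Function.Injective ee := by
  intro i j h
  by_contra hij
  have := congrArg (fun v : E8 => v i) h
  simp [ee, EuclideanSpace.single_apply, hij] at this

lemma simplex_eq : simplex 7 = Set.range ee := rfl

lemma mem_simplex_iff {x : E8} : x ∈ simplex 7 ↔ ∃ i, x = ee i := by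
  constructor
  · rintro ⟨i, rfl⟩; exact ⟨i, rfl⟩
  · rintro ⟨i, rfl⟩; exact ⟨i, rfl⟩

lemma ncard_simplex : (simplex 7).ncard = 8 := by
  rw [simplex_eq, show Set.range ee = ↑(Finset.univ.image ee) by simp,
    Set.ncard_coe_finset, Finset.card_image_of_injective _ ee_injective]
  simp

lemma sqrt2_ne_two : Real.sqrt 2 ≠ 2 := by
  intro h
  have h2 := Real.sq_sqrt (by norm_num : (0:ℝ) ≤ 2)
  rw [h] at h2
  norm_num at h2

lemma sqrt4_eq : Real.sqrt 4 = 2 := by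
  rw [show (4:ℝ) = 2^2 by norm_num, Real.sqrt_sq (by norm_num)]

lemma inter_card_of_dist {A B : Finset (Fin 8)} (hA : A.card = 3) (hB : B.card = 3)
    (h : dist (vSeven A) (vSeven B) = Real.sqrt 2 ∨ dist (vSeven A) (vSeven B) = 2) :
    1 ≤ (A ∩ B).card := by
  rw [dist_vSeven_vSeven hA hB] at h
  by_contra h0
  have ht : (A ∩ B).card = 0 := by omega
  rw [ht, show (6:ℝ) - 2 * ((0:ℕ):ℝ) = 6 by norm_num] at h
  have h6 : Real.sqrt 6 ^ 2 = 6 := Real.sq_sqrt (by norm_num)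
  rcases h with h | h <;> rw [h] at h6
  · rw [Real.sq_sqrt (by norm_num : (0:ℝ) ≤ 2)] at h6; norm_num at h6
  · norm_num at h6

lemma dist_vv_mem {A B : Finset (Fin 8)} (hA : A.card = 3) (hB : B.card = 3)
    (hne : A ≠ B) (h1 : 1 ≤ (A ∩ B).card) :
    dist (vSeven A) (vSeven B) = Real.sqrt 2 ∨ dist (vSeven A) (vSeven B) = 2 := by
  have hsub : A ∩ B ⊆ A := Finset.inter_subset_left
  have ht3 : (A ∩ B).card ≤ 3 := hA ▸ Finset.card_le_card hsub
  have ht2 : (A ∩ B).card ≤ 2 := by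
    by_contra h
    have h3 : (A ∩ B).card = 3 := by omega
    have hAB : A ∩ B = A := Finset.eq_of_subset_of_card_le hsub (by omega)
    have hABs : A ⊆ B := by rw [← Finset.inter_eq_left]; exact hAB
    exact hne (Finset.eq_of_subset_of_card_le hABs (by omega))
  rw [dist_vSeven_vSeven hA hB]
  interval_cases h : (A ∩ B).card
  · right
    rw [show (6:ℝ) - 2 * ((1:ℕ):ℝ) = 4 by push_cast; ring]
    exact sqrt4_eq
  · left
    congr 1
    push_cast; ring

lemma distSet_finite {m : ℕ} {X : Set (EuclideanSpace ℝ (Fin m))} (h : X.Finite) :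
    (distSet X).Finite := by
  have hsub : distSet X ⊆ (fun p : EuclideanSpace ℝ (Fin m) × EuclideanSpace ℝ (Fin m) =>
      dist p.1 p.2) '' (X ×ˢ X) := by
    rintro r ⟨x, hx, y, hy, -, rfl⟩
    exact ⟨(x, y), ⟨hx, hy⟩, rfl⟩
  exact ((h.prod h).image _).subset hsub

lemma choose_val : (8 - 1).choose (3 - 1) = 21 := by decide

lemma upper_bound {X : Set E8} (hfin : X.Finite) (hH : X ⊆ Hplane 7)
    (hs : simplex 7 ⊆ X) (hd : distSet X = {Real.sqrt 2, 2}) : X.ncard ≤ 29 := by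
  classical
  set F : Finset (Finset (Fin 8)) :=
    Finset.univ.filter (fun A => A.card = 3 ∧ vSeven A ∈ X) with hF
  have hXsub : X ⊆ simplex 7 ∪ (vSeven '' ↑F) := by
    intro x hx
    by_cases hxs : x ∈ simplex 7
    · exact Or.inl hxs
    · right
      have hA : ∃ A : Finset (Fin 8), A.card = 3 ∧ x = vSeven A := by
        apply charac (hH hx)
        intro i
        have hei : ee i ∈ X := hs ⟨i, rfl⟩
        have hne : x ≠ ee i := fun h => hxs (h ▸ ⟨i, rfl⟩)
        have hmem : dist x (ee i) ∈ distSet X := ⟨x, hx, ee i, hei, hne, rfl⟩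
        rw [hd] at hmem
        simpa using hmem
      obtain ⟨A, hA3, rfl⟩ := hA
      exact ⟨A, by simp [hF, hA3, hx], rfl⟩
  have hint : (↑F : Set (Finset (Fin 8))).Intersecting := by
    intro A hA B hB hdis
    simp only [hF, Finset.coe_filter, Finset.mem_coe, Set.mem_setOf_eq,
      Finset.mem_filter, Finset.mem_univ, true_and] at hA hB
    have hcard0 : (A ∩ B).card = 0 := by
      rw [Finset.card_eq_zero, ← Finset.disjoint_iff_inter_eq_empty]; exact hdis
    obtain ⟨hA1, hA2⟩ := hA
    obtain ⟨hB1, hB2⟩ := hB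
    by_cases hAB : A = B
    · subst hAB
      rw [Finset.inter_self] at hcard0
      omega
    · have hne : vSeven A ≠ vSeven B := fun h => hAB (vSeven_injective h)
      have hmem : dist (vSeven A) (vSeven B) ∈ distSet X :=
        ⟨_, hA2, _, hB2, hne, rfl⟩
      rw [hd] at hmem
      have h1 := inter_card_of_dist hA1 hB1 (by simpa using hmem)
      omega
  have hsized : (↑F : Set (Finset (Fin 8))).Sized 3 := by
    intro A hA
    simp only [hF, Finset.coe_filter, Set.mem_setOf_eq, Finset.mem_univ, true_and] at hA
    exact hA.1
  have hFcard : F.card ≤ 21 := by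
    have := Finset.erdos_ko_rado hint hsized (by norm_num)
    rwa [choose_val] at this
  have hufin : (simplex 7 ∪ vSeven '' ↑F).Finite := by
    have h1 : (simplex 7).Finite := Set.finite_range _
    exact h1.union (F.finite_toSet.image _)
  calc X.ncard ≤ (simplex 7 ∪ vSeven '' ↑F).ncard := Set.ncard_le_ncard hXsub hufin
    _ ≤ (simplex 7).ncard + (vSeven '' ↑F).ncard := Set.ncard_union_le _ _
    _ ≤ 8 + 21 := by
        rw [ncard_simplex]
        have : (vSeven '' ↑F).ncard = F.card := by
          rw [Set.ncard_image_of_injective _ vSeven_injective, Set.ncard_coe_finset]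
        omega
    _ = 29 := by norm_num

def SF : Set (Finset (Fin 8)) := {A : Finset (Fin 8) | A.card = 3 ∧ (0 : Fin 8) ∈ A}
def X0 : Set E8 := simplex 7 ∪ vSeven '' SF

lemma sum_ee (i : Fin 8) : ∑ j, ee i j = 1 := by
  have hk : ∀ j, ee i j = if j = i then (1:ℝ) else 0 := fun j => by
    simp [ee, EuclideanSpace.single_apply]
  rw [Finset.sum_congr rfl fun j _ => hk j, Finset.sum_ite_eq' Finset.univ i]
  simp

lemma X0_subset_H : X0 ⊆ Hplane 7 := by
  rintro x (⟨i, rfl⟩ | ⟨A, ⟨hA3, -⟩, rfl⟩)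
  · exact sum_ee i
  · exact sum_vSeven hA3

lemma X0_finite : X0.Finite := by
  have h1 : (simplex 7).Finite := Set.finite_range _
  exact h1.union ((Set.toFinite SF).image _)

lemma distSet_X0 : distSet X0 = {Real.sqrt 2, 2} := by
  apply Set.Subset.antisymm
  · rintro r ⟨x, hx, y, hy, hne, rfl⟩
    rcases hx with ⟨i, rfl⟩ | ⟨A, ⟨hA3, hA0⟩, rfl⟩ <;>
      rcases hy with ⟨j, rfl⟩ | ⟨B, ⟨hB3, hB0⟩, rfl⟩
    · have hij : i ≠ j := fun h => hne (by rw [h])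
      exact Or.inl (dist_single_single' hij)
    · rw [dist_comm]
      show dist (vSeven B) (ee i) ∈ ({Real.sqrt 2, 2} : Set ℝ)
      rw [dist_vSeven_single hB3 i]
      by_cases h : i ∈ B <;> simp [h]
    · show dist (vSeven A) (ee j) ∈ ({Real.sqrt 2, 2} : Set ℝ)
      rw [dist_vSeven_single hA3 j]
      by_cases h : j ∈ A <;> simp [h]
    · have hAB : A ≠ B := fun h => hne (by rw [h])
      have h1 : 1 ≤ (A ∩ B).card :=
        Finset.card_pos.2 ⟨0, Finset.mem_inter.2 ⟨hA0, hB0⟩⟩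
      rcases dist_vv_mem hA3 hB3 hAB h1 with h | h
      · exact Or.inl h
      · exact Or.inr h
  · rintro r (rfl | rfl)
    · refine ⟨ee 0, Or.inl ⟨0, rfl⟩, ee 1, Or.inl ⟨1, rfl⟩, ?_, ?_⟩
      · exact fun h => (by norm_num : ¬((0:Fin 8) = 1)) (ee_injective h)
      · exact dist_single_single' (by norm_num)
    · refine ⟨vSeven {0,1,2}, Or.inr ⟨{0,1,2}, ⟨by decide, by decide⟩, rfl⟩,
        ee 0, Or.inl ⟨0, rfl⟩, vSeven_ne_single _ _, ?_⟩
      rw [dist_vSeven_single (by decide) 0]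
      simp

lemma SF_eq : SF = ↑(Finset.univ.filter (fun A : Finset (Fin 8) => A.card = 3 ∧ (0:Fin 8) ∈ A)) := by
  ext A; simp [SF]

lemma ncard_X0 : X0.ncard = 29 := by
  have hdisj : Disjoint (simplex 7) (vSeven '' SF) := by
    rw [Set.disjoint_left]
    rintro x ⟨i, rfl⟩ ⟨A, -, hA⟩
    exact vSeven_ne_single A i hA
  have h1 : (simplex 7).Finite := Set.finite_range _
  have h2 : (vSeven '' SF).Finite := (Set.toFinite SF).image _
  rw [X0, Set.ncard_union_eq hdisj h1 h2, ncard_simplex,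
    Set.ncard_image_of_injective _ vSeven_injective, SF_eq, Set.ncard_coe_finset]
  decide

lemma X0_max {z : E8} (hz : z ∈ Hplane 7) (hzX : z ∉ X0) : ¬ IsTwoDistSet (X0 ∪ {z}) := by
  intro h2
  have hDsub : ({Real.sqrt 2, 2} : Set ℝ) ⊆ distSet (X0 ∪ {z}) := by
    rw [← distSet_X0]
    rintro r ⟨x, hx, y, hy, hne, rfl⟩
    exact ⟨x, Or.inl hx, y, Or.inl hy, hne, rfl⟩
  have hfin : (distSet (X0 ∪ {z})).Finite :=
    distSet_finite (X0_finite.union (Set.finite_singleton z))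
  have hD : distSet (X0 ∪ {z}) = {Real.sqrt 2, 2} := by
    have := Set.eq_of_subset_of_ncard_le hDsub
      (by rw [h2, Set.ncard_pair sqrt2_ne_two]) hfin
    exact this.symm
  have hch : ∃ A : Finset (Fin 8), A.card = 3 ∧ z = vSeven A := by
    apply charac hz
    intro i
    have hei : ee i ∈ X0 := Or.inl ⟨i, rfl⟩
    have hne : z ≠ ee i := fun h => hzX (h ▸ hei)
    have hmem : dist z (ee i) ∈ distSet (X0 ∪ {z}) :=
      ⟨z, Or.inr rfl, ee i, Or.inl hei, hne, rfl⟩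
    rw [hD] at hmem
    simpa using hmem
  obtain ⟨A, hA3, rfl⟩ := hch
  have h0A : (0 : Fin 8) ∉ A := fun h => hzX (Or.inr ⟨A, ⟨hA3, h⟩, rfl⟩)
  have hcompl : ((insert (0:Fin 8) A)ᶜ).card = 4 := by
    rw [Finset.card_compl, Finset.card_insert_of_notMem h0A, hA3]
    simp
  obtain ⟨x, hx⟩ : ((insert (0:Fin 8) A)ᶜ).Nonempty := by
    rw [← Finset.card_pos, hcompl]; norm_num
  obtain ⟨y, hy⟩ : (((insert (0:Fin 8) A)ᶜ).erase x).Nonempty := by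
    rw [← Finset.card_pos, Finset.card_erase_of_mem hx, hcompl]; norm_num
  have hyx : y ≠ x := (Finset.mem_erase.1 hy).1
  have hy' : y ∈ (insert (0:Fin 8) A)ᶜ := (Finset.mem_erase.1 hy).2
  have hx0 : x ≠ 0 := fun h => (Finset.mem_compl.1 hx) (by simp [h])
  have hxA : x ∉ A := fun h => (Finset.mem_compl.1 hx) (by simp [h])
  have hy0 : y ≠ 0 := fun h => (Finset.mem_compl.1 hy') (by simp [h])
  have hyA : y ∉ A := fun h => (Finset.mem_compl.1 hy') (by simp [h])
  set B : Finset (Fin 8) := {0, x, y} with hBdef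
  have hB3 : B.card = 3 := by
    rw [hBdef, Finset.card_insert_of_notMem (by simp [Ne.symm hx0, Ne.symm hy0]),
      Finset.card_insert_of_notMem (by simp [Ne.symm hyx]), Finset.card_singleton]
  have hB0 : (0 : Fin 8) ∈ B := by simp [hBdef]
  have hAB : A ∩ B = ∅ := by
    ext i
    simp only [Finset.mem_inter, hBdef, Finset.mem_insert, Finset.mem_singleton,
      Finset.notMem_empty, iff_false]
    rintro ⟨hiA, rfl | rfl | rfl⟩
    · exact h0A hiA
    · exact hxA hiA
    · exact hyA hiA
  have hvB : vSeven B ∈ X0 := Or.inr ⟨B, ⟨hB3, hB0⟩, rfl⟩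
  have hne : vSeven A ≠ vSeven B := by
    intro h
    have := vSeven_injective h
    rw [this] at h0A
    exact h0A hB0
  have hmem : dist (vSeven A) (vSeven B) ∈ distSet (X0 ∪ {vSeven A}) :=
    ⟨vSeven A, Or.inr rfl, vSeven B, Or.inl hvB, hne, rfl⟩
  rw [hD] at hmem
  have h1 := inter_card_of_dist hA3 hB3 (by simpa using hmem)
  rw [hAB] at h1
  simp at h1

theorem stmt16 :
    IsGreatest {n : ℕ | ∃ X : Set (EuclideanSpace ℝ (Fin (7+1))),
      X.Finite ∧ X ⊆ Hplane 7 ∧ simplex 7 ⊆ X ∧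
      distSet X = {Real.sqrt 2, 2} ∧ X.ncard = n} 29 ∧
    (simplex 7 ∪ vSeven '' {A : Finset (Fin (7+1)) | A.card = 3 ∧ (0 : Fin (7+1)) ∈ A})
        ⊆ Hplane 7 ∧
    distSet (simplex 7 ∪ vSeven ''
        {A : Finset (Fin (7+1)) | A.card = 3 ∧ (0 : Fin (7+1)) ∈ A}) = {Real.sqrt 2, 2} ∧
    (simplex 7 ∪ vSeven ''
        {A : Finset (Fin (7+1)) | A.card = 3 ∧ (0 : Fin (7+1)) ∈ A}).ncard = 29 ∧
    ∀ z ∈ Hplane 7,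
      z ∉ (simplex 7 ∪ vSeven '' {A : Finset (Fin (7+1)) | A.card = 3 ∧ (0 : Fin (7+1)) ∈ A}) →
      ¬ IsTwoDistSet ((simplex 7 ∪ vSeven ''
          {A : Finset (Fin (7+1)) | A.card = 3 ∧ (0 : Fin (7+1)) ∈ A}) ∪ {z}) := by
  refine ⟨⟨⟨X0, X0_finite, X0_subset_H, Set.subset_union_left, distSet_X0, ncard_X0⟩, ?_⟩,
    X0_subset_H, distSet_X0, ncard_X0, fun z hz hzX => X0_max hz hzX⟩
  rintro n ⟨X, hfin, hH, hs, hd, rfl⟩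
  exact upper_bound hfin hH hs hd
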